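/- Let S be a measurable subset of [0,∞), and for each t ∈ [0,1] let S_t = {n ∈ ℕ : t + n ∈ S}. If the density D(S_t) = lim_{N→∞} (1/N) |S_t ∩ [1,N]| exists for almost every t ∈ [0,1], then the density D(S) = lim_{b→∞} (1/b) λ(S ∩ [0,b]) exists and equals ∫_0^1 D(S_t) dt. -/

import Mathlib

open MeasureTheory Filter Topology

-- S ∩ Icc a b has same volume as S ∩ Ioc a b
lemma icc_ioc_vol (S : Set ℝ) (a b : ℝ) :
    volume (S ∩ Set.Icc a b) = volume (S ∩ Set.Ioc a b) := by
  apply le_antisymm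
  · calc volume (S ∩ Set.Icc a b) ≤ volume ((S ∩ Set.Ioc a b) ∪ {a}) := by
          apply measure_mono
          rintro x ⟨hxS, hxa, hxb⟩
          rcases eq_or_lt_of_le hxa with h | h
          · exact Or.inr (by simp [h.symm])
          · exact Or.inl ⟨hxS, h, hxb⟩
      _ ≤ volume (S ∩ Set.Ioc a b) + volume ({a} : Set ℝ) := measure_union_le _ _
      _ = volume (S ∩ Set.Ioc a b) := by simp
  · exact measure_mono (Set.inter_subset_inter_right _ Set.Ioc_subset_Icc_self)

lemma sum_chunks (S : Set ℝ) (hS : MeasurableSet S) (N : ℕ) :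
    ∑ n ∈ Finset.Icc 1 N, volume (S ∩ Set.Ioc (n : ℝ) (n + 1))
      = volume (S ∩ Set.Ioc (1 : ℝ) (N + 1)) := by
  induction N with
  | zero => simp
  | succ N ih =>
      rw [Finset.sum_Icc_succ_top (by omega : 1 ≤ N + 1), ih]
      have hdisj : Disjoint (S ∩ Set.Ioc (1:ℝ) (N + 1)) (S ∩ Set.Ioc ((N+1:ℕ) : ℝ) ((N+1:ℕ) + 1)) := by
        apply Set.disjoint_of_subset Set.inter_subset_right Set.inter_subset_right
        push_cast
        exact Set.Ioc_disjoint_Ioc_of_le le_rfl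
      rw [← measure_union hdisj (hS.inter measurableSet_Ioc), ← Set.inter_union_distrib_left]
      congr 1
      push_cast
      have h1 : (1:ℝ) ≤ N + 1 := by linarith [Nat.cast_nonneg (α := ℝ) N]
      rw [Set.Ioc_union_Ioc_eq_Ioc h1 (by linarith)]

lemma int_block (S : Set ℝ) (hS : MeasurableSet S) (a : ℝ) :
    ∫ t in Set.Icc (0:ℝ) 1, S.indicator (fun _ => (1:ℝ)) (t + a)
      = (volume (S ∩ Set.Icc a (a + 1))).toReal := by
  have hT : MeasurableSet ((· + a) ⁻¹' S) := hS.preimage (measurable_add_const a)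
  have h1 : ∀ t : ℝ, S.indicator (fun _ => (1:ℝ)) (t + a)
      = ((· + a) ⁻¹' S).indicator (fun _ => (1:ℝ)) t := by
    intro t
    by_cases h : t + a ∈ S <;> simp [Set.indicator_apply, h, Set.mem_preimage]
  simp_rw [h1]
  have : ∫ t in Set.Icc (0:ℝ) 1, ((· + a) ⁻¹' S).indicator (fun _ => (1:ℝ)) t
      = ((volume.restrict (Set.Icc (0:ℝ) 1)) ((· + a) ⁻¹' S)).toReal := by
    exact integral_indicator_one (μ := volume.restrict (Set.Icc (0:ℝ) 1)) hT
  rw [this, Measure.restrict_apply hT]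
  congr 1
  have : (· + a) ⁻¹' S ∩ Set.Icc 0 1 = (· + a) ⁻¹' (S ∩ Set.Icc a (a + 1)) := by
    ext x
    simp only [Set.mem_inter_iff, Set.mem_preimage, Set.mem_Icc]
    constructor
    · rintro ⟨h1, h2, h3⟩; exact ⟨h1, by linarith, by linarith⟩
    · rintro ⟨h1, h2, h3⟩; exact ⟨h1, by linarith, by linarith⟩
  rw [this, measure_preimage_add_right]

lemma seq_limit (S : Set ℝ) (hS : MeasurableSet S) (D : ℝ → ℝ)
    (hD : ∀ᵐ t ∂(volume.restrict (Set.Icc (0:ℝ) 1)),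
      Tendsto (fun N : ℕ =>
          (N : ℝ)⁻¹ * ∑ n ∈ Finset.Icc 1 N, S.indicator (fun _ => (1:ℝ)) (t + n))
        atTop (𝓝 (D t))) :
    Tendsto (fun N : ℕ => (N:ℝ)⁻¹ * (volume (S ∩ Set.Ioc (1:ℝ) (N+1))).toReal)
      atTop (𝓝 (∫ t in Set.Icc (0:ℝ) 1, D t)) := by
  set μ := volume.restrict (Set.Icc (0:ℝ) 1)
  have hmeas : ∀ n : ℕ, Measurable (fun t : ℝ => S.indicator (fun _ => (1:ℝ)) (t + n)) :=
    fun n => (measurable_const.indicator hS).comp (measurable_add_const (n:ℝ))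
  have hint : ∀ n : ℕ, Integrable (fun t : ℝ => S.indicator (fun _ => (1:ℝ)) (t + n)) μ := by
    intro n
    refine ⟨(hmeas n).aestronglyMeasurable, ?_⟩
    apply (hasFiniteIntegral_const (1:ℝ)).mono'
    filter_upwards with t
    by_cases h : t + (n:ℝ) ∈ S <;> simp [Set.indicator_apply, h]
  have key : Tendsto (fun N : ℕ => ∫ t, ((N : ℝ)⁻¹ *
        ∑ n ∈ Finset.Icc 1 N, S.indicator (fun _ => (1:ℝ)) (t + n)) ∂μ)
      atTop (𝓝 (∫ t, D t ∂μ)) := by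
    apply tendsto_integral_of_dominated_convergence (fun _ => (1:ℝ)) _ (integrable_const 1) _ hD
    · intro n
      exact ((Finset.measurable_sum _ (fun k _ => hmeas k)).const_mul _).aestronglyMeasurable
    · intro N
      filter_upwards with t
      have h0 : ∀ n : ℕ, (0:ℝ) ≤ S.indicator (fun _ => (1:ℝ)) (t + n) := by
        intro n; exact Set.indicator_nonneg (fun _ _ => zero_le_one) _
      have h1 : ∀ n : ℕ, S.indicator (fun _ => (1:ℝ)) (t + n) ≤ 1 := by
        intro n; exact Set.indicator_le_self' (fun _ _ => zero_le_one) _ |>.trans le_rfl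
      have hsum : (0:ℝ) ≤ ∑ n ∈ Finset.Icc 1 N, S.indicator (fun _ => (1:ℝ)) (t + n) :=
        Finset.sum_nonneg fun n _ => h0 n
      have hsum' : ∑ n ∈ Finset.Icc 1 N, S.indicator (fun _ => (1:ℝ)) (t + n) ≤ N := by
        calc _ ≤ ∑ n ∈ Finset.Icc 1 N, (1:ℝ) := Finset.sum_le_sum fun n _ => h1 n
        _ = N := by simp
      rw [Real.norm_eq_abs, abs_of_nonneg (by positivity)]
      rcases Nat.eq_zero_or_pos N with h | h
      · simp [h]
      · have hN : (0:ℝ) < N := by exact_mod_cast h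
        rw [inv_mul_le_iff₀ hN, mul_one]
        exact hsum'
  have eq1 : ∀ N : ℕ, ∫ t, ((N : ℝ)⁻¹ *
        ∑ n ∈ Finset.Icc 1 N, S.indicator (fun _ => (1:ℝ)) (t + n)) ∂μ
      = (N:ℝ)⁻¹ * (volume (S ∩ Set.Ioc (1:ℝ) (N+1))).toReal := by
    intro N
    rw [integral_const_mul, integral_finset_sum _ (fun n _ => hint n)]
    congr 1
    have : ∀ n ∈ Finset.Icc 1 N, ∫ t, S.indicator (fun _ => (1:ℝ)) (t + n) ∂μ
        = (volume (S ∩ Set.Ioc (n:ℝ) (n + 1))).toReal := by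
      intro n _
      rw [show (∫ t, S.indicator (fun _ => (1:ℝ)) (t + n) ∂μ) =
        ∫ t in Set.Icc (0:ℝ) 1, S.indicator (fun _ => (1:ℝ)) (t + n) from rfl,
        int_block S hS (n:ℝ), icc_ioc_vol]
    rw [Finset.sum_congr rfl this, ← ENNReal.toReal_sum, sum_chunks S hS N]
    intro n _
    exact ((measure_mono Set.inter_subset_right).trans_lt (by simp)).ne
  exact key.congr fun N => eq1 N

theorem stmt18 (S : Set ℝ) (hS : MeasurableSet S)
    (D : ℝ → ℝ)
    (hD : ∀ᵐ t ∂(volume.restrict (Set.Icc (0:ℝ) 1)),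
      Tendsto (fun N : ℕ =>
          (N : ℝ)⁻¹ * ∑ n ∈ Finset.Icc 1 N, S.indicator (fun _ => (1:ℝ)) (t + n))
        atTop (𝓝 (D t))) :
    Tendsto (fun b : ℝ => b⁻¹ * (volume (S ∩ Set.Icc 0 b)).toReal) atTop
      (𝓝 (∫ t in Set.Icc (0:ℝ) 1, D t)) := by
  set L := ∫ t in Set.Icc (0:ℝ) 1, D t with hL
  set m : ℝ → ℝ := fun b => (volume (S ∩ Set.Icc 0 b)).toReal with hm
  have hfin : ∀ y : ℝ, volume (S ∩ Set.Icc 0 y) ≠ ⊤ := by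
    intro y
    refine ((measure_mono Set.inter_subset_right).trans_lt ?_).ne
    rw [Real.volume_Icc]; exact ENNReal.ofReal_lt_top
  have hmono : ∀ x y : ℝ, x ≤ y → m x ≤ m y := by
    intro x y hxy
    exact ENNReal.toReal_le_toReal (hfin x) (hfin y) |>.mpr
      (measure_mono (Set.inter_subset_inter_right _ (Set.Icc_subset_Icc_right hxy)))
  have hm0 : ∀ x : ℝ, 0 ≤ m x := fun x => ENNReal.toReal_nonneg
  -- relate m (N+1) to the Ioc piece
  have hsplit : ∀ N : ℕ, m ((N:ℝ) + 1) = m 1 + (volume (S ∩ Set.Ioc (1:ℝ) (N+1))).toReal := by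
    intro N
    have h1 : (1:ℝ) ≤ (N:ℝ) + 1 := by linarith [Nat.cast_nonneg (α := ℝ) N]
    have : S ∩ Set.Icc 0 ((N:ℝ)+1) = (S ∩ Set.Icc (0:ℝ) 1) ∪ (S ∩ Set.Ioc (1:ℝ) (N+1)) := by
      rw [← Set.inter_union_distrib_left, Set.Icc_union_Ioc_eq_Icc zero_le_one h1]
    have hdisj : Disjoint (S ∩ Set.Icc (0:ℝ) 1) (S ∩ Set.Ioc (1:ℝ) (N+1)) := by
      apply Set.disjoint_of_subset Set.inter_subset_right Set.inter_subset_right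
      rw [Set.disjoint_left]
      rintro x ⟨_, hx1⟩ ⟨hx2, _⟩
      linarith
    rw [hm]
    simp only
    rw [this, measure_union hdisj (hS.inter measurableSet_Ioc),
      ENNReal.toReal_add (hfin 1) (by
        refine ((measure_mono Set.inter_subset_right).trans_lt ?_).ne
        rw [Real.volume_Ioc]; exact ENNReal.ofReal_lt_top)]
  have ha := seq_limit S hS D hD
  -- g N = N⁻¹ * m (N+1) tends to L
  have hg : Tendsto (fun N : ℕ => (N:ℝ)⁻¹ * m ((N:ℝ)+1)) atTop (𝓝 L) := by
    have h2 : Tendsto (fun N : ℕ => (N:ℝ)⁻¹ * m 1) atTop (𝓝 (0 * m 1)) :=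
      (tendsto_inv_atTop_nhds_zero_nat (𝕜 := ℝ)).mul_const _
    have h3 := ha.add h2
    rw [zero_mul, add_zero] at h3
    apply h3.congr
    intro N
    rw [hsplit N]; ring
  -- h N = (N+1)⁻¹ * m N tends to L
  have hh : Tendsto (fun N : ℕ => ((N:ℝ)+1)⁻¹ * m N) atTop (𝓝 L) := by
    rw [← tendsto_add_atTop_iff_nat 1]
    have hq : Tendsto (fun N : ℕ => ((N:ℝ)/((N:ℝ)+2)) * ((N:ℝ)⁻¹ * m ((N:ℝ)+1)))
        atTop (𝓝 (1 * L)) :=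
      (tendsto_natCast_div_add_atTop (2:ℝ)).mul hg
    rw [one_mul] at hq
    apply hq.congr'
    filter_upwards [eventually_ge_atTop 1] with N hN
    have hN0 : (N:ℝ) ≠ 0 := by positivity
    push_cast
    field_simp
    ring
  -- squeeze
  apply tendsto_of_tendsto_of_tendsto_of_le_of_le'
    (hh.comp tendsto_nat_floor_atTop) (hg.comp tendsto_nat_floor_atTop)
  · filter_upwards [eventually_ge_atTop (1:ℝ)] with b hb
    set N := ⌊b⌋₊ with hN
    have hb0 : (0:ℝ) < b := by linarith
    have hNb : (N:ℝ) ≤ b := Nat.floor_le hb0.le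
    have hbN : b < (N:ℝ) + 1 := Nat.lt_floor_add_one b
    have : ((N:ℝ)+1)⁻¹ ≤ b⁻¹ := by
      apply inv_anti₀ hb0 hbN.le
    exact mul_le_mul this (hmono _ _ hNb) (hm0 _) (by positivity)
  · filter_upwards [eventually_ge_atTop (1:ℝ)] with b hb
    set N := ⌊b⌋₊ with hN
    have hN1 : 1 ≤ N := Nat.le_floor (by exact_mod_cast hb)
    have hN0 : (0:ℝ) < N := by exact_mod_cast hN1
    have hNb : (N:ℝ) ≤ b := Nat.floor_le (by linarith)
    have hbN : b < (N:ℝ) + 1 := Nat.lt_floor_add_one b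
    have h1 : b⁻¹ ≤ (N:ℝ)⁻¹ := inv_anti₀ hN0 hNb
    exact mul_le_mul h1 (hmono _ _ hbN.le) (hm0 _) (by positivity)
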